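/- Let x_1, …, x_K be vectors in ℝ^d with ‖x_k‖₂ ≤ 1 for all k and with the linear span of {x_1, …, x_K} of dimension at most r. Let λ > 0 and B > 0 be real numbers, and for each k ∈ {1, …, K} set U_k = λ·I_d + ∑_{t<k} x_t x_tᵀ. Then ∑_{k=1}^{K} min{‖x_k‖²_{U_k⁻¹}, B} ≤ (1 + B)·r·log(1 + K/λ). -/

import Mathlib

open Matrix Finset

section aux
variable {d K : ℕ}

lemma epl_key_log {a : ℝ} (ha : 0 ≤ a) : a ≤ Real.log (1 + a) * (1 + a) := by
  have h1 : (0:ℝ) < 1 + a := by linarith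
  have h := Real.log_le_sub_one_of_pos (show (0:ℝ) < (1+a)⁻¹ by positivity)
  rw [Real.log_inv] at h
  have h3 : (1 - (1+a)⁻¹) * (1+a) ≤ Real.log (1+a) * (1+a) :=
    mul_le_mul_of_nonneg_right (by linarith) h1.le
  have h4 : (1 - (1+a)⁻¹) * (1+a) = a := by field_simp; ring
  linarith

lemma epl_min_le_log {u B : ℝ} (hu : 0 ≤ u) (hB : 0 < B) :
    min u B ≤ (1 + B) * Real.log (1 + u) := by
  have hL0 : 0 ≤ Real.log (1 + u) := Real.log_nonneg (by linarith)
  rcases le_total u B with h | h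
  · rw [min_eq_left h]
    have hk := epl_key_log hu
    nlinarith
  · rw [min_eq_right h]
    have hk := epl_key_log hB.le
    have hmono : Real.log (1 + B) ≤ Real.log (1 + u) :=
      Real.log_le_log (by linarith) (by linarith)
    nlinarith

lemma epl_vecMulVec_mulVec (w v : Fin d → ℝ) :
    vecMulVec w w *ᵥ v = (w ⬝ᵥ v) • w := by
  ext i
  simp only [mulVec, vecMulVec_apply, dotProduct, Pi.smul_apply, smul_eq_mul, Finset.sum_mul]
  exact Finset.sum_congr rfl fun j _ => by ring

lemma epl_posSemidef_vecMulVec (w : Fin d → ℝ) : (vecMulVec w w).PosSemidef := by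
  rw [Matrix.posSemidef_iff_dotProduct_mulVec]
  constructor
  · ext i j
    simp [vecMulVec_apply, conjTranspose_apply, mul_comm]
  · intro v
    rw [epl_vecMulVec_mulVec, dotProduct_smul]
    have : star v = v := star_trivial v
    rw [this, smul_eq_mul, dotProduct_comm]
    exact mul_self_nonneg _

lemma epl_posSemidef_sum {ι : Type*} (s : Finset ι) (f : ι → Matrix (Fin d) (Fin d) ℝ)
    (h : ∀ i ∈ s, (f i).PosSemidef) : (∑ i ∈ s, f i).PosSemidef := by
  classical
  induction s using Finset.induction with
  | empty => simpa using Matrix.PosSemidef.zero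
  | insert _ _ hnot ih =>
    rw [Finset.sum_insert hnot]
    exact (h _ (Finset.mem_insert_self _ _)).add (ih fun i hi => h i (Finset.mem_insert_of_mem hi))

lemma epl_posDef {G : Matrix (Fin d) (Fin d) ℝ} (hG : G.PosSemidef) {lam : ℝ} (hlam : 0 < lam) :
    (lam • (1 : Matrix (Fin d) (Fin d) ℝ) + G).PosDef := by
  refine Matrix.PosDef.add_posSemidef ?_ hG
  rw [smul_one_eq_diagonal]
  exact Matrix.posDef_diagonal_iff.mpr fun _ => hlam

lemma epl_det_add_vecMulVec {A : Matrix (Fin d) (Fin d) ℝ} (hA : A.PosDef) (w : Fin d → ℝ) :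
    (A + vecMulVec w w).det = A.det * (1 + w ⬝ᵥ A⁻¹ *ᵥ w) := by
  rw [vecMulVec_eq Unit, Matrix.det_add_replicateCol_mul_replicateRow hA.det_pos.ne'.isUnit]
  congr 1
  rw [det_unique, Matrix.add_apply, Matrix.one_apply_eq]
  congr 1
  rw [← Matrix.replicateRow_vecMul, Matrix.replicateRow_mul_replicateCol_apply, ← dotProduct_mulVec]

lemma epl_sum_mulVec {ι : Type*} (s : Finset ι) (M : ι → Matrix (Fin d) (Fin d) ℝ)
    (u : Fin d → ℝ) : (∑ t ∈ s, M t) *ᵥ u = ∑ t ∈ s, M t *ᵥ u := by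
  ext i
  simp only [mulVec, dotProduct, Matrix.sum_apply, Finset.sum_mul]
  rw [Finset.sum_comm]
  simp [mulVec, dotProduct]

lemma epl_rank_le (x : Fin K → Fin d → ℝ) :
    (∑ t, vecMulVec (x t) (x t)).rank
      ≤ Module.finrank ℝ (Submodule.span ℝ (Set.range x)) := by
  rw [Matrix.rank]
  apply Submodule.finrank_mono
  rintro v ⟨u, rfl⟩
  rw [Matrix.mulVecLin_apply, epl_sum_mulVec]
  refine Submodule.sum_mem _ (fun t _ => ?_)
  rw [epl_vecMulVec_mulVec]
  exact Submodule.smul_mem _ _ (Submodule.subset_span ⟨t, rfl⟩)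

lemma epl_trace_vecMulVec (w : Fin d → ℝ) :
    (vecMulVec w w).trace = ∑ c, w c ^ 2 := by
  simp [Matrix.trace, Matrix.diag, vecMulVec_apply, pow_two]
end aux
variable {d : ℕ}

lemma epl_det_eq_prod {G : Matrix (Fin d) (Fin d) ℝ} (hH : G.IsHermitian) (lam : ℝ) :
    (lam • (1 : Matrix (Fin d) (Fin d) ℝ) + G).det = ∏ i, (lam + hH.eigenvalues i) := by
  set S : Matrix (Fin d) (Fin d) ℝ := (hH.eigenvectorUnitary : Matrix (Fin d) (Fin d) ℝ)
  have hSS : S * star S = 1 := (Matrix.mem_unitaryGroup_iff).mp hH.eigenvectorUnitary.2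
  have hdecomp : lam • (1 : Matrix (Fin d) (Fin d) ℝ) + G
      = S * (lam • (1 : Matrix (Fin d) (Fin d) ℝ) + diagonal hH.eigenvalues) * star S := by
    rw [Matrix.mul_add, Matrix.add_mul]
    congr 1
    · rw [Matrix.mul_smul, Matrix.smul_mul, Matrix.mul_one, hSS]
    · have := hH.spectral_theorem
      simpa using this
  have h1 : S.det * (star S).det = 1 := by rw [← Matrix.det_mul, hSS, Matrix.det_one]
  rw [hdecomp, Matrix.det_mul, Matrix.det_mul, mul_right_comm, h1, one_mul,
    smul_one_eq_diagonal, diagonal_add, det_diagonal]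

lemma epl_sum_eigs {G : Matrix (Fin d) (Fin d) ℝ} (hH : G.IsHermitian) :
    ∑ i, hH.eigenvalues i = G.trace := by
  set S : Matrix (Fin d) (Fin d) ℝ := (hH.eigenvectorUnitary : Matrix (Fin d) (Fin d) ℝ)
  have hSS : star S * S = 1 := (Matrix.mem_unitaryGroup_iff').mp hH.eigenvectorUnitary.2
  have h := hH.spectral_theorem
  calc ∑ i, hH.eigenvalues i = (diagonal hH.eigenvalues).trace := by
        rw [trace_diagonal]
    _ = G.trace := by
        conv_rhs => rw [show G = S * diagonal hH.eigenvalues * star S by simpa using h]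
        rw [Matrix.trace_mul_cycle, hSS, Matrix.one_mul]

lemma epl_log_det_le {G : Matrix (Fin d) (Fin d) ℝ} (hG : G.PosSemidef) {lam Kr rr : ℝ}
    (hlam : 0 < lam) (htr : G.trace ≤ Kr) (hKr : 0 ≤ Kr) (hrank : (G.rank : ℝ) ≤ rr) :
    Real.log (lam • (1 : Matrix (Fin d) (Fin d) ℝ) + G).det
      ≤ d * Real.log lam + rr * Real.log (1 + Kr / lam) := by
  have hH := hG.1
  set μ := hH.eigenvalues with hμdef
  have hμ0 : ∀ i, 0 ≤ μ i := hG.eigenvalues_nonneg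
  have hμK : ∀ i, μ i ≤ Kr := fun i =>
    le_trans (Finset.single_le_sum (fun j _ => hμ0 j) (Finset.mem_univ i))
      (le_trans (le_of_eq (epl_sum_eigs hH)) htr)
  have hd : (lam • (1 : Matrix (Fin d) (Fin d) ℝ) + G).det = ∏ i, (lam + μ i) :=
    epl_det_eq_prod hH lam
  have hpos : ∀ i, 0 < lam + μ i := fun i => by linarith [hμ0 i]
  rw [hd, Real.log_prod (fun i _ => (hpos i).ne')]
  have hcount : (Finset.univ.filter (fun i : Fin d => μ i ≠ 0)).card = G.rank := by
    rw [hH.rank_eq_card_non_zero_eigs, Fintype.card_subtype]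
  have hlogK : 0 ≤ Real.log (1 + Kr / lam) := Real.log_nonneg (by
    have : 0 ≤ Kr / lam := div_nonneg hKr hlam.le
    linarith)
  have hterm : ∑ i, (Real.log (lam + μ i) - Real.log lam) ≤ rr * Real.log (1 + Kr / lam) := by
    have h1 : ∑ i, (Real.log (lam + μ i) - Real.log lam)
        = ∑ i ∈ Finset.univ.filter (fun i : Fin d => μ i ≠ 0),
            (Real.log (lam + μ i) - Real.log lam) := by
      refine (Finset.sum_subset (Finset.filter_subset _ _) ?_).symm
      intro i _ hi
      simp only [Finset.mem_filter, Finset.mem_univ, true_and, not_not] at hi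
      rw [hi, add_zero, sub_self]
    have h2 : ∑ i ∈ Finset.univ.filter (fun i : Fin d => μ i ≠ 0),
        (Real.log (lam + μ i) - Real.log lam)
        ≤ (Finset.univ.filter (fun i : Fin d => μ i ≠ 0)).card • Real.log (1 + Kr / lam) := by
      refine Finset.sum_le_card_nsmul _ _ _ (fun i _ => ?_)
      rw [← Real.log_div (hpos i).ne' hlam.ne']
      apply Real.log_le_log (div_pos (hpos i) hlam)
      have he : (lam + μ i) / lam = 1 + μ i / lam := by field_simp
      rw [he]
      have : μ i / lam ≤ Kr / lam := by gcongr; exact hμK i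
      linarith
    rw [h1]
    refine le_trans h2 ?_
    rw [nsmul_eq_mul, hcount]
    exact mul_le_mul_of_nonneg_right hrank hlogK
  have hsum : ∑ i, Real.log (lam + μ i)
      = d * Real.log lam + ∑ i, (Real.log (lam + μ i) - Real.log lam) := by
    rw [Finset.sum_sub_distrib, Finset.sum_const, Finset.card_univ, Fintype.card_fin,
      nsmul_eq_mul]
    ring
  linarith
/-- elliptical potential lemma, squared version: for unit-bounded
vectors `x_1, …, x_K` of span dimension at most `r`, with
`U_k = λ I + ∑_{t<k} x_t x_tᵀ`,
`∑_{k} min{‖x_k‖²_{U_k⁻¹}, B} ≤ (1 + B) r log(1 + K/λ)`. -/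
theorem elliptical_potential_sq
    {d r K : ℕ} (lam B : ℝ) (hlam : 0 < lam) (hB : 0 < B)
    (x : Fin K → (Fin d → ℝ))
    (hnorm : ∀ k, Real.sqrt (∑ c, (x k c) ^ 2) ≤ 1)
    (hx : Module.finrank ℝ (Submodule.span ℝ (Set.range x)) ≤ r)
    (U : Fin K → Matrix (Fin d) (Fin d) ℝ)
    (hU : ∀ k, U k = lam • (1 : Matrix (Fin d) (Fin d) ℝ)
        + ∑ t ∈ Finset.univ.filter (fun t => t < k), vecMulVec (x t) (x t)) :
    ∑ k, min (x k ⬝ᵥ (U k)⁻¹.mulVec (x k)) B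
      ≤ (1 + B) * r * Real.log (1 + K / lam) := by
  classical
  obtain ⟨W, hWdef⟩ : ∃ W : ℕ → Matrix (Fin d) (Fin d) ℝ, ∀ n,
      W n = lam • (1 : Matrix (Fin d) (Fin d) ℝ)
        + ∑ t ∈ Finset.univ.filter (fun t : Fin K => (t : ℕ) < n), vecMulVec (x t) (x t) :=
    ⟨_, fun _ => rfl⟩
  have hWpd : ∀ n, (W n).PosDef := fun n => by
    rw [hWdef]
    exact epl_posDef (epl_posSemidef_sum _ _ (fun t _ => epl_posSemidef_vecMulVec _)) hlam
  have hUW : ∀ k : Fin K, U k = W k.val := by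
    intro k
    rw [hU k, hWdef]
    congr 1
  obtain ⟨u, hu⟩ : ∃ u : Fin K → ℝ, ∀ k, u k = x k ⬝ᵥ (W k.val)⁻¹ *ᵥ x k := ⟨_, fun _ => rfl⟩
  have hu0 : ∀ k, 0 ≤ u k := by
    intro k
    rw [hu k]
    have h := ((hWpd k.val).inv.posSemidef).dotProduct_mulVec_nonneg (x k)
    simpa using h
  have hdet : ∀ n : ℕ, (W n).det
      = lam ^ d * ∏ k ∈ Finset.univ.filter (fun k : Fin K => (k : ℕ) < n), (1 + u k) := by
    intro n
    induction n with
    | zero =>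
      rw [hWdef]
      simp [smul_one_eq_diagonal, det_diagonal]
    | succ n ih =>
      by_cases hnK : n < K
      · have hfil : Finset.univ.filter (fun t : Fin K => (t : ℕ) < n + 1)
            = insert (⟨n, hnK⟩ : Fin K)
                (Finset.univ.filter (fun t : Fin K => (t : ℕ) < n)) := by
          ext t
          simp only [Finset.mem_filter, Finset.mem_univ, true_and, Finset.mem_insert,
            Fin.ext_iff]
          omega
        have hnotmem : (⟨n, hnK⟩ : Fin K) ∉
            Finset.univ.filter (fun t : Fin K => (t : ℕ) < n) := by simp
        have hstep : W (n + 1) = W n + vecMulVec (x ⟨n, hnK⟩) (x ⟨n, hnK⟩) := by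
          rw [hWdef, hWdef, hfil, Finset.sum_insert hnotmem]
          abel
        rw [hstep, epl_det_add_vecMulVec (hWpd n), ih, hfil, Finset.prod_insert hnotmem,
          ← hu ⟨n, hnK⟩]
        ring
      · have hfil : Finset.univ.filter (fun t : Fin K => (t : ℕ) < n + 1)
            = Finset.univ.filter (fun t : Fin K => (t : ℕ) < n) := by
          ext t
          simp only [Finset.mem_filter, Finset.mem_univ, true_and]
          have := t.isLt
          omega
        rw [hWdef, hfil, ← hWdef, ih]
  have hfilK : Finset.univ.filter (fun k : Fin K => (k : ℕ) < K) = Finset.univ := by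
    ext t; simp [t.isLt]
  have hdetK : (W K).det = lam ^ d * ∏ k, (1 + u k) := by
    rw [hdet K, hfilK]
  have hprodpos : ∀ k : Fin K, (0:ℝ) < 1 + u k := fun k => by linarith [hu0 k]
  have hlog : Real.log ((W K).det) = d * Real.log lam + ∑ k, Real.log (1 + u k) := by
    rw [hdetK, Real.log_mul (pow_ne_zero _ hlam.ne') (Finset.prod_ne_zero_iff.mpr
      (fun k _ => (hprodpos k).ne')), Real.log_pow,
      Real.log_prod (fun k _ => (hprodpos k).ne')]
  -- spectral bound
  have hG : (∑ t, vecMulVec (x t) (x t) : Matrix (Fin d) (Fin d) ℝ).PosSemidef :=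
    epl_posSemidef_sum _ _ (fun t _ => epl_posSemidef_vecMulVec _)
  have htr : (∑ t, vecMulVec (x t) (x t) : Matrix (Fin d) (Fin d) ℝ).trace ≤ (K : ℝ) := by
    rw [Matrix.trace_sum]
    calc ∑ t, (vecMulVec (x t) (x t)).trace = ∑ t : Fin K, ∑ c, (x t c) ^ 2 := by
          exact Finset.sum_congr rfl fun t _ => epl_trace_vecMulVec _
      _ ≤ ∑ _t : Fin K, (1:ℝ) := by
          refine Finset.sum_le_sum fun t _ => ?_
          have hs : 0 ≤ ∑ c, (x t c) ^ 2 := Finset.sum_nonneg fun c _ => sq_nonneg _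
          nlinarith [Real.sq_sqrt hs, Real.sqrt_nonneg (∑ c, (x t c) ^ 2), hnorm t]
      _ = (K : ℝ) := by simp
  have hrk : ((∑ t, vecMulVec (x t) (x t) : Matrix (Fin d) (Fin d) ℝ).rank : ℝ) ≤ (r : ℝ) := by
    exact_mod_cast le_trans (epl_rank_le x) hx
  have hWK : W K = lam • (1 : Matrix (Fin d) (Fin d) ℝ) + ∑ t, vecMulVec (x t) (x t) := by
    rw [hWdef, hfilK]
  have hmain : Real.log ((W K).det)
      ≤ d * Real.log lam + r * Real.log (1 + (K : ℝ) / lam) := by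
    rw [hWK]
    exact epl_log_det_le hG hlam htr (by positivity) hrk
  have hsum : ∑ k, Real.log (1 + u k) ≤ r * Real.log (1 + (K : ℝ) / lam) := by
    linarith [hlog, hmain]
  calc ∑ k, min (x k ⬝ᵥ (U k)⁻¹.mulVec (x k)) B
      = ∑ k, min (u k) B := by
        refine Finset.sum_congr rfl fun k _ => ?_
        rw [hUW k, hu k]
    _ ≤ ∑ k, (1 + B) * Real.log (1 + u k) :=
        Finset.sum_le_sum fun k _ => epl_min_le_log (hu0 k) hB
    _ = (1 + B) * ∑ k, Real.log (1 + u k) := (Finset.mul_sum _ _ _).symm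
    _ ≤ (1 + B) * (r * Real.log (1 + (K : ℝ) / lam)) :=
        mul_le_mul_of_nonneg_left hsum (by linarith)
    _ = (1 + B) * r * Real.log (1 + K / lam) := by ring
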